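/- arXiv:2605.07322 — 3 statements merged into one kernel-verified Lean document; each statement's English description precedes it below -/
import Mathlib

section
/- Let n ≥ 3 be an odd integer and let G be an n-vertex graph with minimum degree δ(G) ≥ (n−1)/2. If more than (n + 3)/2 vertices of G have degree at least (n + 1)/2, then for every pair of vertices u, v ∈ V(G) there is a Hamilton path in G with endpoints u and v. -/
open SimpleGraph Finset List

variable {V : Type*} [Fintype V] [DecidableEq V]
set_option linter.unusedSectionVars false

/-- A closed walk visiting every vertex exactly once (in its tail). -/
def HamCyc (G : SimpleGraph V) : Prop :=
  ∃ (a : V) (c : G.Walk a a), ∀ z : V, c.support.tail.count z = 1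

lemma list_len_of_counts {l : List V} (h : ∀ z : V, l.count z = 1) :
    l.length = Fintype.card V := by
  have hnd : l.Nodup := List.nodup_iff_count_le_one.2 fun a => (h a).le
  have huniv : l.toFinset = Finset.univ := by
    apply Finset.eq_univ_iff_forall.2
    intro z
    simp only [List.mem_toFinset, ← List.count_pos_iff, h z]
    norm_num
  have := congrArg Finset.card huniv
  rwa [List.toFinset_card_of_nodup hnd, Finset.card_univ] at this

lemma walk_end_mem_tail {G : SimpleGraph V} {a b : V} (w : G.Walk a b) (hw : ¬w.Nil) :
    b ∈ w.support.tail := by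
  cases w with
  | nil => simp at hw
  | cons h w' => simpa using w'.end_mem_support

lemma walk_start_ne_end {G : SimpleGraph V} {a b : V} (w : G.Walk a b) (hw : ¬w.Nil)
    (h1 : w.support.count a = 1) : a ≠ b := by
  intro hEq
  subst hEq
  have := walk_end_mem_tail w hw
  rw [w.support_eq_cons, List.count_cons_self] at h1
  have : 0 < w.support.tail.count a := List.count_pos_iff.2 this
  omega

lemma rotate_tail_count {G : SimpleGraph V} {a u : V} (c : G.Walk a a) (h : u ∈ c.support)
    (z : V) : (c.rotate u h).support.tail.count z = c.support.tail.count z :=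
  ((c.support_rotate u h).perm).count_eq z

lemma support_eq_map_getVert {G : SimpleGraph V} {a b : V} (w : G.Walk a b) :
    w.support = (List.range (w.length + 1)).map w.getVert := by
  induction w with
  | nil => simp [List.range_succ]
  | @cons u x b h w' ih =>
    rw [SimpleGraph.Walk.support_cons, ih, SimpleGraph.Walk.length_cons,
      List.range_succ_eq_map (n := w'.length + 1)]
    simp [List.map_map, Function.comp_def]

lemma getVert_inj {G : SimpleGraph V} {a b : V} (w : G.Walk a b)
    (hnd : w.support.Nodup) {i j : ℕ} (hi : i ≤ w.length) (hj : j ≤ w.length)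
    (h : w.getVert i = w.getVert j) : i = j := by
  rw [support_eq_map_getVert] at hnd
  exact List.inj_on_of_nodup_map hnd (List.mem_range.2 (by omega))
    (List.mem_range.2 (by omega)) h

lemma cycle_sup_edge {K : SimpleGraph V} {x y : V} (hxy : x ≠ y)
    (h3 : 3 ≤ Fintype.card V)
    (hcyc : HamCyc (K ⊔ SimpleGraph.edge x y)) :
    HamCyc K ∨ ∃ p : K.Walk x y, ∀ z, p.support.count z = 1 := by
  obtain ⟨a, c0, hc0⟩ := hcyc
  have hx : x ∈ c0.support :=
    List.mem_of_mem_tail (List.count_pos_iff.1 (by rw [hc0 x]; norm_num))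
  have hc : ∀ z, (c0.rotate x hx).support.tail.count z = 1 := fun z => by
    rw [rotate_tail_count]; exact hc0 z
  set c := c0.rotate x hx with hcdef
  clear_value c
  have hlen : c.length = Fintype.card V := by
    have h1 : c.support.tail.length = Fintype.card V := list_len_of_counts hc
    have h2 : c.support.length = c.length + 1 := c.length_support
    rw [c.support_eq_cons] at h2
    simp only [List.length_cons] at h2
    omega
  have hcnil : ¬ c.Nil := by
    rw [SimpleGraph.Walk.not_nil_iff_lt_length]; omega
  obtain ⟨b, h₁, q, hq⟩ := SimpleGraph.Walk.not_nil_iff.1 hcnil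
  have hqc : ∀ z, q.support.count z = 1 := by
    intro z
    have := hc z
    rw [hq, SimpleGraph.Walk.support_cons] at this
    simpa using this
  have hqlen : q.length + 1 = Fintype.card V := by
    have := congrArg SimpleGraph.Walk.length hq
    rw [SimpleGraph.Walk.length_cons] at this
    omega
  have hqnil : ¬ q.Nil := by
    rw [SimpleGraph.Walk.not_nil_iff_lt_length]; omega
  obtain ⟨b', h', q'', hq''⟩ := SimpleGraph.Walk.not_nil_iff.1 hqnil
  obtain ⟨e, q₁, h₂, heq⟩ := SimpleGraph.Walk.exists_cons_eq_concat h' q''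
  rw [← hq''] at heq
  -- heq : q = q₁.concat h₂,  q₁ : Walk b e,  h₂ : G'.Adj e x
  have hsupp : q.support = q₁.support ++ [x] := by
    rw [heq, SimpleGraph.Walk.support_concat]
  have hx0 : q₁.support.count x = 0 := by
    have := hqc x
    rw [hsupp, List.count_append] at this
    simpa using this
  have hxns : x ∉ q₁.support := List.count_eq_zero.1 hx0
  have hz1 : ∀ z, z ≠ x → q₁.support.count z = 1 := by
    intro z hz
    have := hqc z
    rw [hsupp, List.count_append] at this
    simpa [List.count_singleton, hz, Ne.symm hz] using this
  have hbx : b ≠ x := fun h => hxns (h ▸ q₁.start_mem_support)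
  have hex : e ≠ x := fun h => hxns (h ▸ q₁.end_mem_support)
  have hq₁nil : ¬ q₁.Nil := by
    have := congrArg SimpleGraph.Walk.length heq
    rw [SimpleGraph.Walk.length_concat] at this
    rw [SimpleGraph.Walk.not_nil_iff_lt_length]
    omega
  have hbe : b ≠ e := walk_start_ne_end q₁ hq₁nil (hz1 b hbx)
  have hKedges : ∀ e' ∈ q₁.edges, e' ∈ K.edgeSet := by
    intro e' he'
    have hmem : e' ∈ (K ⊔ SimpleGraph.edge x y).edgeSet := q₁.edges_subset_edgeSet he'
    rw [SimpleGraph.edgeSet_sup, SimpleGraph.edge_edgeSet_of_ne hxy] at hmem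
    rcases hmem with h | h
    · exact h
    · exfalso
      rw [Set.mem_singleton_iff] at h
      subst h
      exact hxns (q₁.fst_mem_support_of_mem_edges he')
  have hadj : ∀ {a' b' : V}, (K ⊔ SimpleGraph.edge x y).Adj a' b' →
      K.Adj a' b' ∨ ((a' = x ∧ b' = y) ∨ (a' = y ∧ b' = x)) := by
    intro a' b' h
    rcases h with h | h
    · exact Or.inl h
    · rw [SimpleGraph.edge_adj] at h
      exact Or.inr h.1
  set q₁K := q₁.transfer K hKedges with hq₁K
  have hq₁Ksupp : q₁K.support = q₁.support := q₁.support_transfer hKedges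
  by_cases hb : b = y
  · -- first edge of the cycle is the added edge x-y; rest is a path y → ⋯ → x in K
    have hKe : K.Adj e x := by
      rcases hadj h₂ with h | ⟨h, -⟩ | ⟨h, -⟩
      · exact h
      · exact absurd h hex
      · exact absurd (h.trans hb.symm) hbe.symm
    subst hb
    refine Or.inr ⟨(q₁K.concat hKe).reverse, ?_⟩
    intro z
    rw [SimpleGraph.Walk.support_reverse, List.count_reverse,
      SimpleGraph.Walk.support_concat, List.count_append, hq₁Ksupp]
    by_cases hzx : z = x
    · subst hzx; simp [hx0]
    · have h1 : List.count z [x] = 0 := List.count_eq_zero.2 (by simp [hzx])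
      simp [hz1 z hzx, h1]
  · have hKb : K.Adj x b := by
      rcases hadj h₁ with h | ⟨-, h⟩ | ⟨h, -⟩
      · exact h
      · exact absurd h hb
      · exact absurd h hxy
    by_cases he : e = y
    · subst he
      refine Or.inr ⟨SimpleGraph.Walk.cons hKb q₁K, ?_⟩
      intro z
      rw [SimpleGraph.Walk.support_cons, List.count_cons, hq₁Ksupp]
      by_cases hzx : z = x
      · subst hzx; simp [hx0]
      · simp [List.count_cons, hz1 z hzx, Ne.symm hzx]
    · have hKe : K.Adj e x := by
        rcases hadj h₂ with h | ⟨h, -⟩ | ⟨h, -⟩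
        · exact h
        · exact absurd h hex
        · exact absurd h he
      refine Or.inl ⟨x, SimpleGraph.Walk.cons hKb (q₁K.concat hKe), ?_⟩
      intro z
      rw [SimpleGraph.Walk.support_cons, List.tail_cons,
        SimpleGraph.Walk.support_concat, List.count_append, hq₁Ksupp]
      by_cases hzx : z = x
      · subst hzx; simp [hx0]
      · have h1 : List.count z [x] = 0 := List.count_eq_zero.2 (by simp [hzx])
        rw [hz1 z hzx, h1]

lemma crossing_lemma {K : SimpleGraph V} {x y : V} (hxy : x ≠ y) (hna : ¬K.Adj x y)
    (hdeg : Fintype.card V ≤ (K.neighborSet x).ncard + (K.neighborSet y).ncard)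
    (p : K.Walk x y) (hp : ∀ z, p.support.count z = 1) : HamCyc K := by
  classical
  have hnd : p.support.Nodup := List.nodup_iff_count_le_one.2 fun a => (hp a).le
  have hL : p.length + 1 = Fintype.card V := by
    have h1 : p.support.length = Fintype.card V := list_len_of_counts hp
    have h2 : p.support.length = p.length + 1 := p.length_support
    omega
  have hpnil : ¬ p.Nil := by
    intro h
    exact hxy (SimpleGraph.Walk.Nil.eq h)
  have hLpos : 0 < p.length := SimpleGraph.Walk.not_nil_iff_lt_length.1 hpnil
  set L := p.length with hLdef
  set A := (Finset.range L).filter (fun i => K.Adj x (p.getVert (i+1))) with hA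
  set B := (Finset.range L).filter (fun i => K.Adj y (p.getVert i)) with hB
  have hcardA : A.card = (K.neighborSet x).toFinset.card := by
    apply Finset.card_bij (fun i _ => p.getVert (i+1))
    · intro i hi
      rw [Set.mem_toFinset, SimpleGraph.mem_neighborSet]
      exact (Finset.mem_filter.1 hi).2
    · intro i hi j hj h
      have hi' : i < L := Finset.mem_range.1 (Finset.mem_filter.1 hi).1
      have hj' : j < L := Finset.mem_range.1 (Finset.mem_filter.1 hj).1
      have := getVert_inj p hnd (i := i+1) (j := j+1) (by omega) (by omega) h
      omega
    · intro w hw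
      rw [Set.mem_toFinset, SimpleGraph.mem_neighborSet] at hw
      have hws : w ∈ p.support := by
        rw [← List.count_pos_iff, hp w]; norm_num
      obtain ⟨j, hj1, hj2⟩ := SimpleGraph.Walk.mem_support_iff_exists_getVert.1 hws
      have hj0 : j ≠ 0 := by
        intro h
        subst h
        rw [p.getVert_zero] at hj1
        subst hj1
        exact K.irrefl hw
      refine ⟨j - 1, Finset.mem_filter.2 ⟨Finset.mem_range.2 (by omega), ?_⟩, ?_⟩
      · rw [(by omega : j - 1 + 1 = j), hj1]; exact hw
      · rw [(by omega : j - 1 + 1 = j), hj1]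
  have hcardB : B.card = (K.neighborSet y).toFinset.card := by
    apply Finset.card_bij (fun i _ => p.getVert i)
    · intro i hi
      rw [Set.mem_toFinset, SimpleGraph.mem_neighborSet]
      exact (Finset.mem_filter.1 hi).2
    · intro i hi j hj h
      have hi' : i < L := Finset.mem_range.1 (Finset.mem_filter.1 hi).1
      have hj' : j < L := Finset.mem_range.1 (Finset.mem_filter.1 hj).1
      exact getVert_inj p hnd (by omega) (by omega) h
    · intro w hw
      rw [Set.mem_toFinset, SimpleGraph.mem_neighborSet] at hw
      have hws : w ∈ p.support := by
        rw [← List.count_pos_iff, hp w]; norm_num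
      obtain ⟨j, hj1, hj2⟩ := SimpleGraph.Walk.mem_support_iff_exists_getVert.1 hws
      have hjL : j ≠ L := by
        intro h
        subst h
        rw [p.getVert_length] at hj1
        subst hj1
        exact K.irrefl hw
      refine ⟨j, Finset.mem_filter.2 ⟨Finset.mem_range.2 (by omega), by rw [hj1]; exact hw⟩, hj1⟩
  have hABsub : A ∪ B ⊆ Finset.range L := by
    intro i hi
    rcases Finset.mem_union.1 hi with h | h
    · exact (Finset.mem_filter.1 h).1
    · exact (Finset.mem_filter.1 h).1
  have hinter : 0 < (A ∩ B).card := by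
    have h1 := Finset.card_union_add_card_inter A B
    have h2 : (A ∪ B).card ≤ L := le_trans (Finset.card_le_card hABsub) (by simp)
    have h3 : Fintype.card V ≤ A.card + B.card := by
      rw [hcardA, hcardB, ← Set.ncard_eq_toFinset_card', ← Set.ncard_eq_toFinset_card']
      exact hdeg
    omega
  obtain ⟨i, hi⟩ := Finset.card_pos.1 hinter
  have hiA := Finset.mem_filter.1 (Finset.mem_inter.1 hi).1
  have hiB := Finset.mem_filter.1 (Finset.mem_inter.1 hi).2
  have hiL : i < L := Finset.mem_range.1 hiA.1
  have hxm : K.Adj x (p.getVert (i+1)) := hiA.2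
  have hyz : K.Adj y (p.getVert i) := hiB.2
  have hz : p.getVert i ∈ p.support :=
    SimpleGraph.Walk.mem_support_iff_exists_getVert.2 ⟨i, rfl, by omega⟩
  set z := p.getVert i with hzdef
  obtain ⟨P1, P2, hspec⟩ : ∃ (P1 : K.Walk x z) (P2 : K.Walk z y), P1.append P2 = p :=
    ⟨p.takeUntil z hz, p.dropUntil z hz, p.take_spec hz⟩
  have hlensum : P1.length + P2.length = L := by
    have := congrArg SimpleGraph.Walk.length hspec
    rwa [SimpleGraph.Walk.length_append] at this
  have hgv1 : p.getVert P1.length = z := by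
    rw [← hspec, SimpleGraph.Walk.getVert_append]
    simp
  have hlen1 : P1.length = i :=
    getVert_inj p hnd (by omega) (by omega) (by rw [hgv1])
  have hP2nil : ¬ P2.Nil := by
    rw [SimpleGraph.Walk.not_nil_iff_lt_length]; omega
  obtain ⟨m, h₃, qq, hq3⟩ := SimpleGraph.Walk.not_nil_iff.1 hP2nil
  have hm : m = p.getVert (i+1) := by
    rw [← hspec, SimpleGraph.Walk.getVert_append, if_neg (by omega), hlen1,
      (by omega : i + 1 - i = 1), hq3]
    simp [SimpleGraph.Walk.getVert_cons_succ]
  have hxm' : K.Adj x m := by rw [hm]; exact hxm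
  refine ⟨x, SimpleGraph.Walk.cons hxm' (qq.append (SimpleGraph.Walk.cons hyz P1.reverse)), ?_⟩
  intro z₀
  have hps : p.support = P1.support ++ qq.support := by
    rw [← hspec, SimpleGraph.Walk.support_append, hq3]
    simp
  have := hp z₀
  rw [hps, List.count_append] at this
  rw [SimpleGraph.Walk.support_cons, List.tail_cons, SimpleGraph.Walk.support_append,
    SimpleGraph.Walk.support_cons, List.tail_cons, List.count_append,
    SimpleGraph.Walk.support_reverse, List.count_reverse]
  omega

lemma top_path (l : List V) : ∀ (a b : V), a ∉ l → b ∉ l → a ≠ b → l.Nodup →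
    ∃ w : (⊤ : SimpleGraph V).Walk a b, w.support = a :: (l ++ [b]) := by
  induction l with
  | nil =>
    intro a b _ _ hab _
    exact ⟨SimpleGraph.Walk.cons (by simp [hab]) SimpleGraph.Walk.nil, by simp⟩
  | cons c t ih =>
    intro a b ha hb hab hnd
    have hct : c ∉ t := (List.nodup_cons.1 hnd).1
    have hbt : b ∉ t := fun h => hb (List.mem_cons_of_mem _ h)
    have hcb : c ≠ b := fun h => hb (h ▸ List.mem_cons_self)
    obtain ⟨w', hw'⟩ := ih c b hct hbt hcb (List.nodup_cons.1 hnd).2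
    have hac : a ≠ c := fun h => ha (h ▸ List.mem_cons_self)
    exact ⟨SimpleGraph.Walk.cons (by simp [hac]) w', by simp [hw']⟩

lemma hamCyc_top (h3 : 3 ≤ Fintype.card V) : HamCyc (⊤ : SimpleGraph V) := by
  classical
  have hnd : (Finset.univ : Finset V).toList.Nodup := Finset.nodup_toList _
  have hlen : (Finset.univ : Finset V).toList.length = Fintype.card V := by
    rw [Finset.length_toList, Finset.card_univ]
  have hmem : ∀ z : V, z ∈ (Finset.univ : Finset V).toList := by
    intro z; rw [Finset.mem_toList]; exact Finset.mem_univ z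
  set l := (Finset.univ : Finset V).toList with hl
  obtain ⟨a, t, hat⟩ : ∃ a t, l = a :: t := by
    cases hl' : l with
    | nil => rw [hl'] at hlen; simp at hlen; omega
    | cons a t => exact ⟨a, t, rfl⟩
  have htne : t ≠ [] := by
    intro h
    rw [hat, h] at hlen; simp at hlen; omega
  obtain ⟨t₁, b, htb⟩ := List.eq_nil_or_concat t |>.resolve_left htne
  rw [List.concat_eq_append] at htb
  have hndt : (a :: (t₁ ++ [b])).Nodup := by rw [← htb, ← hat]; exact hnd
  have hat1 : a ∉ t₁ := by
    have := (List.nodup_cons.1 hndt).1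
    simp only [List.mem_append] at this
    exact fun h => this (Or.inl h)
  have hab : a ≠ b := by
    have := (List.nodup_cons.1 hndt).1
    simp only [List.mem_append, List.mem_singleton] at this
    exact fun h => this (Or.inr h)
  have hbt1 : b ∉ t₁ := by
    have := (List.nodup_cons.1 hndt).2
    rw [List.nodup_append] at this
    exact fun h => this.2.2 b h b (List.mem_singleton_self b) rfl
  have hndt1 : t₁.Nodup := by
    have := (List.nodup_cons.1 hndt).2
    rw [List.nodup_append] at this
    exact this.1
  obtain ⟨w, hw⟩ := top_path t₁ a b hat1 hbt1 hab hndt1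
  refine ⟨a, w.concat (by simp [hab.symm]), ?_⟩
  intro z
  have hc : (w.concat (show (⊤ : SimpleGraph V).Adj b a by simp [hab.symm])).support
      = w.support ++ [a] := by
    rw [SimpleGraph.Walk.support_concat]
  rw [hc, hw]
  have hcount : (a :: (t₁ ++ [b])).count z = 1 :=
    List.count_eq_one_of_mem hndt (by have := hmem z; rw [hat, htb] at this; exact this)
  have hperm : ((t₁ ++ [b]) ++ [a]).Perm (a :: (t₁ ++ [b])) := by
    simpa using List.perm_append_comm (l₁ := t₁ ++ [b]) (l₂ := [a])
  show ((a :: (t₁ ++ [b])) ++ [a]).tail.count z = 1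
  rw [List.cons_append, List.tail_cons, hperm.count_eq]
  exact hcount

lemma closure_induction (H : SimpleGraph V) (h3 : 3 ≤ Fintype.card V)
    (hext : ∀ K : SimpleGraph V, H ≤ K → K ≠ ⊤ → ∃ x y : V, x ≠ y ∧ ¬K.Adj x y ∧
      Fintype.card V ≤ (K.neighborSet x).ncard + (K.neighborSet y).ncard) :
    HamCyc H := by
  classical
  suffices h : ∀ (k : ℕ) (K : SimpleGraph V), H ≤ K →
      ((⊤ : SimpleGraph V).edgeSet \ K.edgeSet).ncard ≤ k → HamCyc K by
    exact h (((⊤ : SimpleGraph V).edgeSet \ H.edgeSet).ncard) H le_rfl le_rfl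
  intro k
  induction k with
  | zero =>
    intro K hHK hcard
    have hfin : ((⊤ : SimpleGraph V).edgeSet \ K.edgeSet).Finite := Set.toFinite _
    have hempty : (⊤ : SimpleGraph V).edgeSet \ K.edgeSet = ∅ :=
      (Set.ncard_eq_zero hfin).1 (by omega)
    have hsub : (⊤ : SimpleGraph V).edgeSet ⊆ K.edgeSet := Set.diff_eq_empty.1 hempty
    have hKtop : K = ⊤ := le_antisymm le_top (SimpleGraph.edgeSet_subset_edgeSet.1 hsub)
    rw [hKtop]
    exact hamCyc_top h3
  | succ k ih =>
    intro K hHK hcard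
    by_cases hKtop : K = ⊤
    · rw [hKtop]; exact hamCyc_top h3
    · obtain ⟨x, y, hxy, hna, hdeg⟩ := hext K hHK hKtop
      have hKK' : K ≤ K ⊔ SimpleGraph.edge x y := le_sup_left
      have hmem : s(x, y) ∈ (⊤ : SimpleGraph V).edgeSet \ K.edgeSet := by
        constructor
        · rw [SimpleGraph.mem_edgeSet]; exact hxy
        · rw [SimpleGraph.mem_edgeSet]; exact hna
      have hES : (K ⊔ SimpleGraph.edge x y).edgeSet = K.edgeSet ∪ {s(x, y)} := by
        rw [SimpleGraph.edgeSet_sup, SimpleGraph.edge_edgeSet_of_ne hxy]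
      have hdiff : (⊤ : SimpleGraph V).edgeSet \ (K ⊔ SimpleGraph.edge x y).edgeSet
          = ((⊤ : SimpleGraph V).edgeSet \ K.edgeSet) \ {s(x, y)} := by
        rw [hES, Set.diff_diff]
      have hnc : (((⊤ : SimpleGraph V).edgeSet \ K.edgeSet) \ {s(x, y)}).ncard
          = ((⊤ : SimpleGraph V).edgeSet \ K.edgeSet).ncard - 1 := by
        rw [Set.ncard_diff_singleton_of_mem hmem]
      have hpos : 0 < ((⊤ : SimpleGraph V).edgeSet \ K.edgeSet).ncard :=
        Set.ncard_pos (Set.toFinite _) |>.2 ⟨_, hmem⟩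
      have hcyc' : HamCyc (K ⊔ SimpleGraph.edge x y) := by
        apply ih _ (le_trans hHK hKK')
        rw [hdiff, hnc]
        omega
      rcases cycle_sup_edge hxy h3 hcyc' with h | ⟨p, hp⟩
      · exact h
      · exact crossing_lemma hxy hna hdeg p hp

lemma ncard_nbr_ge {K : SimpleGraph V} {t : V} (S : Finset V) (hS : ∀ s ∈ S, K.Adj t s) :
    S.card ≤ (K.neighborSet t).ncard := by
  classical
  have hsub : S ⊆ (K.neighborSet t).toFinset := fun s hs => Set.mem_toFinset.2 (hS s hs)
  calc S.card ≤ (K.neighborSet t).toFinset.card := Finset.card_le_card hsub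
    _ = (K.neighborSet t).ncard := (Set.ncard_eq_toFinset_card' _).symm

lemma down_walk {n : ℕ} {G : SimpleGraph (Fin n)} {H' : SimpleGraph (Fin (n+1))}
    {f : Fin n ↪ Fin (n+1)}
    (hW : ∀ a b : Fin (n+1), a ≠ Fin.last n → b ≠ Fin.last n → H'.Adj a b → (G.map f).Adj a b) :
    ∀ {a b : Fin (n+1)} (w : H'.Walk a b), (Fin.last n) ∉ w.support →
      ∀ (a' b' : Fin n), f a' = a → f b' = b →
      ∃ w' : G.Walk a' b', w'.support.map f = w.support := by
  intro a b w
  induction w with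
  | nil =>
    intro _ a' b' ha hb
    have hab : a' = b' := f.injective (ha.trans hb.symm)
    subst hab
    exact ⟨SimpleGraph.Walk.nil, by simp [ha]⟩
  | @cons p c q h w ih =>
    intro hns a' b' ha hb
    simp only [SimpleGraph.Walk.support_cons, List.mem_cons, not_or] at hns
    have hcW : c ≠ Fin.last n := fun hc => hns.2 (hc ▸ w.start_mem_support)
    have hmap := hW p c (fun hp => hns.1 hp.symm) hcW h
    rw [SimpleGraph.map_adj] at hmap
    obtain ⟨p₂, c₂, hadj, hp₂, hc₂⟩ := hmap
    have hpa : p₂ = a' := f.injective (hp₂.trans ha.symm)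
    subst hpa
    obtain ⟨w', hw'⟩ := ih hns.2 c₂ b' hc₂ hb
    exact ⟨SimpleGraph.Walk.cons hadj w', by simp [hw', ha]⟩

/-- **Lemma (part 3).** Let `n ≥ 3` be odd and `G` an `n`-vertex graph with
`δ(G) ≥ (n-1)/2`. If more than `(n + 3)/2` vertices have degree at least
`(n + 1)/2`, then for every pair of vertices `u, v` there is a Hamilton
`{u,v}`-path. -/
theorem hamilton_path_many_large_degrees_odd (n : ℕ) (hn : 3 ≤ n) (hno : Odd n)
    (G : SimpleGraph (Fin n)) [DecidableRel G.Adj]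
    (hδ : (n - 1) / 2 ≤ G.minDegree)
    (hbig : (n + 3) / 2 < (Finset.univ.filter (fun v => (n + 1) / 2 ≤ G.degree v)).card)
    (u v : Fin n) (huv : u ≠ v) :
    ∃ p : G.Walk u v, p.IsHamiltonian := by
  classical
  obtain ⟨m, hm⟩ := hno
  subst hm
  have hm1 : 1 ≤ m := by omega
  set f : Fin (2*m+1) ↪ Fin (2*m+1+1) := ⟨Fin.castSucc, Fin.castSucc_injective (2*m+1)⟩ with hf
  set W : Fin (2*m+1+1) := Fin.last (2*m+1) with hW
  have hfW : ∀ z : Fin (2*m+1), f z ≠ W := fun z => (Fin.castSucc_lt_last z).ne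
  set H : SimpleGraph (Fin (2*m+1+1)) :=
    G.map f ⊔ (SimpleGraph.edge W (f u) ⊔ SimpleGraph.edge W (f v)) with hH
  have hfufv : f u ≠ f v := fun h => huv (f.injective h)
  have hHWu : H.Adj W (f u) := by
    rw [hH]
    refine Or.inr (Or.inl ?_)
    rw [SimpleGraph.edge_adj]
    exact ⟨Or.inl ⟨rfl, rfl⟩, (hfW u).symm⟩
  have hHWv : H.Adj W (f v) := by
    rw [hH]
    refine Or.inr (Or.inr ?_)
    rw [SimpleGraph.edge_adj]
    exact ⟨Or.inl ⟨rfl, rfl⟩, (hfW v).symm⟩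
  have hWnb : ∀ b : Fin (2*m+1+1), H.Adj W b → b = f u ∨ b = f v := by
    intro b hb
    rw [hH] at hb
    rcases hb with hb | hb | hb
    · rw [SimpleGraph.map_adj] at hb
      obtain ⟨z₁, z₂, _, hz₁, _⟩ := hb
      exact absurd hz₁ (hfW z₁)
    · rw [SimpleGraph.edge_adj] at hb
      rcases hb.1 with ⟨_, h⟩ | ⟨h, _⟩
      · exact Or.inl h
      · exact absurd h.symm (hfW u)
    · rw [SimpleGraph.edge_adj] at hb
      rcases hb.1 with ⟨_, h⟩ | ⟨h, _⟩
      · exact Or.inr h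
      · exact absurd h.symm (hfW v)
  have hcast : ∀ a b : Fin (2*m+1+1), a ≠ W → b ≠ W → H.Adj a b → (G.map f).Adj a b := by
    intro a b haW hbW hab
    rw [hH] at hab
    rcases hab with h | h | h
    · exact h
    · rw [SimpleGraph.edge_adj] at h
      rcases h.1 with ⟨h', _⟩ | ⟨_, h'⟩
      · exact absurd h' haW
      · exact absurd h' hbW
    · rw [SimpleGraph.edge_adj] at h
      rcases h.1 with ⟨h', _⟩ | ⟨_, h'⟩
      · exact absurd h' haW
      · exact absurd h' hbW
  have hcardV : Fintype.card (Fin (2*m+1+1)) = 2 * m + 2 := by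
    rw [Fintype.card_fin]
  -- the set of high-degree vertices
  set S : Finset (Fin (2*m+1)) := Finset.univ.filter (fun z => m + 1 ≤ G.degree z) with hS
  have hScard : m + 3 ≤ S.card := by
    have hiff : ∀ z : Fin (2*m+1), ((2*m+1 + 1) / 2 ≤ G.degree z) ↔ (m + 1 ≤ G.degree z) := by
      intro z; omega
    have : Finset.univ.filter (fun z => (2*m+1 + 1) / 2 ≤ G.degree z) = S := by
      rw [hS]
      exact Finset.filter_congr (fun z _ => by rw [hiff z])
    rw [this] at hbig
    omega
  have hdegAll : ∀ z : Fin (2*m+1), m ≤ G.degree z := by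
    intro z
    have h1 := G.minDegree_le_degree z
    have h2 : (2*m+1 - 1) / 2 = m := by omega
    omega
  have hSdeg : ∀ z ∈ S, m + 1 ≤ G.degree z := fun z hz => (Finset.mem_filter.1 hz).2
  -- degree transfer to supergraphs of the mapped graph
  have hKdeg : ∀ (K : SimpleGraph (Fin (2*m+1+1))), G.map f ≤ K → ∀ z : Fin (2*m+1),
      G.degree z ≤ (K.neighborSet (f z)).ncard := by
    intro K hK z
    have := ncard_nbr_ge (K := K) (t := f z) ((G.neighborFinset z).map f) ?_
    · rwa [Finset.card_map, SimpleGraph.card_neighborFinset_eq_degree] at this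
    · intro s hs
      rw [Finset.mem_map] at hs
      obtain ⟨w, hw, rfl⟩ := hs
      rw [SimpleGraph.mem_neighborFinset] at hw
      exact hK (by rw [SimpleGraph.map_adj]; exact ⟨z, w, hw, rfl, rfl⟩)
  have hmapH : G.map f ≤ H := by rw [hH]; exact le_sup_left
  -- verify the closure condition
  have hext : ∀ K : SimpleGraph (Fin (2*m+1+1)), H ≤ K → K ≠ ⊤ → ∃ x y : Fin (2*m+1+1),
      x ≠ y ∧ ¬K.Adj x y ∧
      Fintype.card (Fin (2*m+1+1)) ≤ (K.neighborSet x).ncard + (K.neighborSet y).ncard := by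
    intro K hHK hKtop
    have hKmap : G.map f ≤ K := le_trans hmapH hHK
    have hKz : ∀ z : Fin (2*m+1), m ≤ (K.neighborSet (f z)).ncard :=
      fun z => le_trans (hdegAll z) (hKdeg K hKmap z)
    have hKzS : ∀ z ∈ S, m + 1 ≤ (K.neighborSet (f z)).ncard :=
      fun z hz => le_trans (hSdeg z hz) (hKdeg K hKmap z)
    by_cases h1 : ∃ z₁ ∈ S, ∃ z₂ ∈ S, z₁ ≠ z₂ ∧ ¬K.Adj (f z₁) (f z₂)
    · obtain ⟨z₁, hz₁, z₂, hz₂, hne, hna⟩ := h1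
      refine ⟨f z₁, f z₂, fun h => hne (f.injective h), hna, ?_⟩
      have := hKzS z₁ hz₁
      have := hKzS z₂ hz₂
      omega
    · push_neg at h1
      have hHi : ∀ z ∈ S, m + 2 ≤ (K.neighborSet (f z)).ncard := by
        intro z hz
        have hcard : m + 2 ≤ ((S.erase z).map f).card := by
          rw [Finset.card_map, Finset.card_erase_of_mem hz]
          omega
        refine le_trans hcard (ncard_nbr_ge _ ?_)
        intro s hs
        rw [Finset.mem_map] at hs
        obtain ⟨w, hw, rfl⟩ := hs
        have hwS := Finset.mem_of_mem_erase hw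
        have hwne := Finset.ne_of_mem_erase hw
        exact h1 z hz w hwS (fun h => hwne h.symm)
      by_cases h2 : ∃ z₁ ∈ S, ∃ z₂ : Fin (2*m+1), z₁ ≠ z₂ ∧ ¬K.Adj (f z₁) (f z₂)
      · obtain ⟨z₁, hz₁, z₂, hne, hna⟩ := h2
        refine ⟨f z₁, f z₂, fun h => hne (f.injective h), hna, ?_⟩
        have := hHi z₁ hz₁
        have := hKz z₂
        omega
      · push_neg at h2
        have hAll : ∀ t : Fin (2*m+1), m + 2 ≤ (K.neighborSet (f t)).ncard := by
          intro t
          have hcard : m + 2 ≤ ((S.erase t).map f).card := by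
            rw [Finset.card_map]
            have := Finset.pred_card_le_card_erase (s := S) (a := t)
            omega
          refine le_trans hcard (ncard_nbr_ge _ ?_)
          intro s hs
          rw [Finset.mem_map] at hs
          obtain ⟨w, hw, rfl⟩ := hs
          have hwS := Finset.mem_of_mem_erase hw
          have hwne := Finset.ne_of_mem_erase hw
          exact (h2 w hwS t hwne).symm
        by_cases h3 : ∃ t₁ t₂ : Fin (2*m+1), t₁ ≠ t₂ ∧ ¬K.Adj (f t₁) (f t₂)
        · obtain ⟨t₁, t₂, hne, hna⟩ := h3
          refine ⟨f t₁, f t₂, fun h => hne (f.injective h), hna, ?_⟩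
          have := hAll t₁
          have := hAll t₂
          omega
        · push_neg at h3
          have hbig2 : ∀ t : Fin (2*m+1), 2 * m ≤ (K.neighborSet (f t)).ncard := by
            intro t
            have hcard : 2 * m ≤ ((Finset.univ.erase t).map f).card := by
              rw [Finset.card_map, Finset.card_erase_of_mem (Finset.mem_univ t),
                Finset.card_univ, Fintype.card_fin]
              omega
            refine le_trans hcard (ncard_nbr_ge _ ?_)
            intro s hs
            rw [Finset.mem_map] at hs
            obtain ⟨w, hw, rfl⟩ := hs
            have hwne := Finset.ne_of_mem_erase hw
            exact (h3 w t hwne).symm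
          obtain ⟨a, b, hab, hnadj⟩ : ∃ a b : Fin (2*m+1+1), a ≠ b ∧ ¬K.Adj a b := by
            by_contra hcon
            push_neg at hcon
            apply hKtop
            ext a b
            simp only [SimpleGraph.top_adj]
            exact ⟨fun h => K.ne_of_adj h, fun h => hcon a b h⟩
          have hWdeg : 2 ≤ (K.neighborSet W).ncard := by
            have hcard : ({f u, f v} : Finset (Fin (2*m+1+1))).card = 2 :=
              Finset.card_pair hfufv
            refine le_trans (le_of_eq hcard.symm) (ncard_nbr_ge _ ?_)
            intro s hs
            rcases Finset.mem_insert.1 hs with h | h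
            · subst h; exact hHK hHWu
            · rw [Finset.mem_singleton] at h; subst h; exact hHK hHWv
          rcases Fin.eq_castSucc_or_eq_last a with ⟨a', ha'⟩ | haW
          · rcases Fin.eq_castSucc_or_eq_last b with ⟨b', hb'⟩ | hbW
            · exfalso
              apply hnadj
              have : a' ≠ b' := by
                intro h
                apply hab
                rw [ha', hb', h]
              have := h3 a' b' this
              rw [ha', hb']
              exact this
            · -- b = W
              refine ⟨a, b, hab, hnadj, ?_⟩
              have h1 := hbig2 a'
              have hfa : f a' = a := ha'.symm
              rw [hfa] at h1
              rw [hbW, ← hW]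
              omega
          · -- a = W
            rcases Fin.eq_castSucc_or_eq_last b with ⟨b', hb'⟩ | hbW
            · refine ⟨a, b, hab, hnadj, ?_⟩
              have h1 := hbig2 b'
              have hfb : f b' = b := hb'.symm
              rw [hfb] at h1
              rw [haW, ← hW]
              omega
            · exact absurd (haW.trans hbW.symm) hab
  -- use the closure machinery to get a Hamiltonian cycle in `H`
  have hamH : HamCyc H := closure_induction H (by rw [hcardV]; omega) hext
  obtain ⟨a, c0, hc0⟩ := hamH
  have hWmem : W ∈ c0.support :=
    List.mem_of_mem_tail (List.count_pos_iff.1 (by rw [hc0 W]; norm_num))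
  have hc : ∀ z, (c0.rotate W hWmem).support.tail.count z = 1 := fun z => by
    rw [rotate_tail_count]; exact hc0 z
  set c := c0.rotate W hWmem with hcdef
  clear_value c
  have hlen : c.length = 2 * m + 2 := by
    have h1 : c.support.tail.length = Fintype.card (Fin (2*m+1+1)) := list_len_of_counts hc
    have h2 : c.support.length = c.length + 1 := c.length_support
    rw [c.support_eq_cons] at h2
    simp only [List.length_cons] at h2
    rw [hcardV] at h1
    omega
  have hcnil : ¬ c.Nil := by rw [SimpleGraph.Walk.not_nil_iff_lt_length]; omega
  obtain ⟨b, h₁, q, hq⟩ := SimpleGraph.Walk.not_nil_iff.1 hcnil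
  have hqc : ∀ z, q.support.count z = 1 := by
    intro z; have := hc z; rw [hq, SimpleGraph.Walk.support_cons] at this; simpa using this
  have hqlen : q.length + 1 = 2 * m + 2 := by
    have := congrArg SimpleGraph.Walk.length hq
    rw [SimpleGraph.Walk.length_cons] at this; omega
  have hqnil : ¬ q.Nil := by rw [SimpleGraph.Walk.not_nil_iff_lt_length]; omega
  obtain ⟨b', h', q'', hq''⟩ := SimpleGraph.Walk.not_nil_iff.1 hqnil
  obtain ⟨e, q₁, h₂, heq⟩ := SimpleGraph.Walk.exists_cons_eq_concat h' q''
  rw [← hq''] at heq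
  have hsupp : q.support = q₁.support ++ [W] := by
    rw [heq, SimpleGraph.Walk.support_concat]
  have hW0 : q₁.support.count W = 0 := by
    have := hqc W; rw [hsupp, List.count_append] at this; simpa using this
  have hWns : W ∉ q₁.support := List.count_eq_zero.1 hW0
  have hz1 : ∀ z, z ≠ W → q₁.support.count z = 1 := by
    intro z hz
    have := hqc z; rw [hsupp, List.count_append] at this
    have h0 : List.count z [W] = 0 := List.count_eq_zero.2 (by simp [hz])
    omega
  have hq₁nil : ¬ q₁.Nil := by
    have := congrArg SimpleGraph.Walk.length heq
    rw [SimpleGraph.Walk.length_concat] at this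
    rw [SimpleGraph.Walk.not_nil_iff_lt_length]; omega
  have hbW : b ≠ W := fun h => hWns (h ▸ q₁.start_mem_support)
  have heW : e ≠ W := fun h => hWns (h ▸ q₁.end_mem_support)
  have hbe : b ≠ e := walk_start_ne_end q₁ hq₁nil (hz1 b hbW)
  have hbuv : b = f u ∨ b = f v := hWnb b h₁
  have heuv : e = f u ∨ e = f v := hWnb e (H.adj_symm h₂)
  have hdw := down_walk (G := G) (H' := H) (f := f) hcast q₁ hWns
  rcases hbuv with hbu | hbv
  · rcases heuv with heu | hev
    · exact absurd (hbu.trans heu.symm) hbe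
    · obtain ⟨w', hw'⟩ := hdw u v hbu.symm hev.symm
      refine ⟨w', ?_⟩
      intro z
      have hcnt : w'.support.count z = q₁.support.count (f z) := by
        rw [← hw', List.count_map_of_injective _ f f.injective]
      rw [hcnt]
      exact hz1 (f z) (hfW z)
  · rcases heuv with heu | hev
    · obtain ⟨w', hw'⟩ := hdw v u hbv.symm heu.symm
      refine ⟨w'.reverse, ?_⟩
      intro z
      rw [SimpleGraph.Walk.support_reverse, List.count_reverse]
      have hcnt : w'.support.count z = q₁.support.count (f z) := by
        rw [← hw', List.count_map_of_injective _ f f.injective]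
      rw [hcnt]
      exact hz1 (f z) (hfW z)
    · exact absurd (hbv.trans hev.symm) hbe
end

section
/- Let n be an even integer, let G be an n-vertex graph whose edges are colored with 2 colors by χ, and suppose V(G) admits a partition V(G) = A ⊔ B such that: for any two distinct vertices x, y lying in the same part, χ(xu) = χ(yu) for every common neighbor u of x and y; and for any two vertices x, y lying in different parts, χ(xu) ≠ χ(yu) for every common neighbor u of x and y. Then every Hamilton cycle of G is even-chromatic. -/
open SimpleGraph

private def fin2Z : Fin 2 → ZMod 2 := fun x => x

private lemma zmod2_add_self (x : ZMod 2) : x + x = 0 := by revert x; decide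

private lemma zmod2_eq_add_one {x y : ZMod 2} (h : x ≠ y) : x = y + 1 := by
  revert h; revert x y; decide

private lemma list_sum_map_add {α : Type*} (l : List α) (f g : α → ZMod 2) :
    (l.map (fun x => f x + g x)).sum = (l.map f).sum + (l.map g).sum := by
  induction l with
  | nil => simp
  | cons x t ih => simp only [List.map_cons, List.sum_cons, ih]; ring

private lemma list_sum_const {α : Type*} (l : List α) (f : α → ZMod 2) (k : ZMod 2)
    (h : ∀ x ∈ l, f x = k) : (l.map f).sum = l.length • k := by
  induction l with
  | nil => simp
  | cons x t ih =>
    simp only [List.map_cons, List.sum_cons, List.length_cons, succ_nsmul]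
    rw [h x (by simp), ih (fun y hy => h y (by simp [hy]))]; ring

private lemma chain'_eq_head {α β : Type*} (f : α → β) : ∀ (l : List α) (x : α),
    List.Chain' (fun a b => f a = f b) (x :: l) → ∀ y ∈ x :: l, f y = f x := by
  intro l
  induction l with
  | nil => intro x _ y hy; simp at hy; subst hy; rfl
  | cons z t ih =>
    intro x hc y hy
    obtain ⟨h1, hc'⟩ := List.isChain_cons_cons.mp hc
    rcases List.mem_cons.mp hy with rfl | hy
    · rfl
    · rw [ih z hc' y hy, ← h1]

private lemma filter_len_cast {α : Type*} (f : α → Fin 2) (c : Fin 2) (l : List α) :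
    (((l.filter (fun e => f e = c)).length : ℕ) : ZMod 2) =
      l.length • (1 + fin2Z c) + (l.map (fun e => fin2Z (f e))).sum := by
  induction l with
  | nil => simp
  | cons x t ih =>
    rw [List.filter_cons]
    by_cases h : f x = c
    · rw [if_pos (by simp [h])]
      simp only [List.length_cons, List.map_cons, List.sum_cons,
        succ_nsmul, Nat.cast_add, Nat.cast_one, ih, h]
      have h4 : ∀ x : ZMod 2, x * 4 = 0 := by decide
      linear_combination zmod2_add_self (fin2Z c) - h4 (fin2Z c)
    · rw [if_neg (by simp [h])]
      simp only [List.length_cons, List.map_cons, List.sum_cons, succ_nsmul, ih]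
      have hfx := zmod2_eq_add_one (show fin2Z (f x) ≠ fin2Z c from fun hh => h hh)
      rw [hfx]
      have h1 := zmod2_add_self (1 + fin2Z c)
      have h4 : ∀ x : ZMod 2, x * 4 = 0 := by decide
      have h4' : (4 : ZMod 2) = 0 := by decide
      linear_combination h1 - h4 (fin2Z c) - h4'

/-- If `n` is even and the vertex set of a 2-edge-colored `n`-vertex graph `G`
can be partitioned into parts `A ⊔ B` so that vertices in the same part agree
(`χ(xu) = χ(yu)` for every common neighbor `u`) and vertices in different
parts disagree (`χ(xu) ≠ χ(yu)` for every common neighbor `u`), then every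
Hamilton cycle of `G` is even-chromatic. -/
theorem even_hamilton_of_agreement_partition (n : ℕ) (hne : Even n)
    (G : SimpleGraph (Fin n)) (χ : Sym2 (Fin n) → Fin 2)
    (A B : Set (Fin n))
    (hpart : ∀ v, (v ∈ A ∧ v ∉ B) ∨ (v ∈ B ∧ v ∉ A))
    (hagree : ∀ x y : Fin n, x ≠ y → ((x ∈ A ∧ y ∈ A) ∨ (x ∈ B ∧ y ∈ B)) →
      ∀ u, G.Adj x u → G.Adj y u → χ s(x, u) = χ s(y, u))
    (hdisagree : ∀ x y : Fin n, ((x ∈ A ∧ y ∈ B) ∨ (x ∈ B ∧ y ∈ A)) →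
      ∀ u, G.Adj x u → G.Adj y u → χ s(x, u) ≠ χ s(y, u)) :
    ∀ (a : Fin n) (w : G.Walk a a), w.IsHamiltonianCycle →
      ∀ c : Fin 2, Even ((w.edges.filter (fun e => χ e = c)).length) := by
  classical
  intro a w hw c
  set F : Fin n → ZMod 2 := fun v => if v ∈ A then 0 else 1 with hFdef
  have hFA : ∀ v ∈ A, F v = 0 := fun v hv => by simp [hFdef, hv]
  have hFB : ∀ v, v ∉ A → F v = 1 := fun v hv => by simp [hFdef, hv]
  -- key pointwise lemma
  have hkey : ∀ x y u : Fin n, G.Adj x u → G.Adj y u →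
      fin2Z (χ s(x, u)) + F x = fin2Z (χ s(y, u)) + F y := by
    intro x y u hx hy
    rcases hpart x with ⟨hx1, hx2⟩ | ⟨hx1, hx2⟩ <;>
      rcases hpart y with ⟨hy1, hy2⟩ | ⟨hy1, hy2⟩
    · by_cases hxy : x = y
      · subst hxy; rfl
      · have h := hagree x y hxy (Or.inl ⟨hx1, hy1⟩) u hx hy
        rw [hFA x hx1, hFA y hy1, h]
    · have h := hdisagree x y (Or.inl ⟨hx1, hy1⟩) u hx hy
      rw [hFA x hx1, hFB y hy2, zmod2_eq_add_one (show fin2Z (χ s(x,u)) ≠ fin2Z (χ s(y,u)) from fun hh => h hh)]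
      ring
    · have h := hdisagree x y (Or.inr ⟨hx1, hy1⟩) u hx hy
      rw [hFB x hx2, hFA y hy1, zmod2_eq_add_one (show fin2Z (χ s(x,u)) ≠ fin2Z (χ s(y,u)) from fun hh => h hh)]
      have h2 : (2:ZMod 2) = 0 := by decide
      linear_combination h2
    · by_cases hxy : x = y
      · subst hxy; rfl
      · have h := hagree x y hxy (Or.inr ⟨hx1, hy1⟩) u hx hy
        rw [hFB x hx2, hFB y hy2, h]
  -- the dart invariant
  set g : G.Dart → ZMod 2 := fun d => fin2Z (χ d.edge) + F d.fst + F d.snd with hgdef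
  have hchain : List.Chain' (fun d d' => g d = g d') w.darts := by
    apply List.IsChain.imp ?_ w.isChain_dartAdj_darts
    intro d d' hdd
    have h2 : G.Adj d'.snd d.snd := by rw [hdd]; exact d'.adj.symm
    have key := hkey d.fst d'.snd d.snd d.adj h2
    have hs : s(d'.snd, d.snd) = s(d'.fst, d'.snd) := by rw [hdd]; exact Sym2.eq_swap
    rw [hs] at key
    have hF' : F d'.fst = F d.snd := by rw [hdd]
    simp only [hgdef]
    rw [hF']
    have key' : fin2Z (χ d.edge) + F d.toProd.1 = fin2Z (χ d'.edge) + F d'.toProd.2 := key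
    linear_combination key'
  obtain ⟨k, hk⟩ : ∃ k, ∀ d ∈ w.darts, g d = k := by
    rcases hd : w.darts with _ | ⟨d0, ds⟩
    · exact ⟨0, by simp⟩
    · rw [hd] at hchain
      exact ⟨g d0, chain'_eq_head g ds d0 hchain⟩
  have hlen : w.darts.length = n := by
    rw [SimpleGraph.Walk.length_darts, hw.length_eq, Fintype.card_fin]
  have hsum_g : (w.darts.map g).sum = 0 := by
    rw [list_sum_const _ g k hk, hlen]
    obtain ⟨m, rfl⟩ := hne
    rw [add_nsmul]
    exact zmod2_add_self _
  have hfst : (w.darts.map (fun d => F d.fst)).sum = (w.support.dropLast.map F).sum := by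
    rw [← w.map_fst_darts, List.map_map]
    rfl
  have hsnd : (w.darts.map (fun d => F d.snd)).sum = (w.support.tail.map F).sum := by
    rw [← w.map_snd_darts, List.map_map]
    rfl
  have hTD : (w.support.tail.map F).sum = (w.support.dropLast.map F).sum := by
    have hne' : w.support ≠ [] := w.support_ne_nil
    have e1 : (w.support.map F).sum = F a + (w.support.tail.map F).sum := by
      conv_lhs => rw [w.support_eq_cons]
      rw [List.map_cons, List.sum_cons]
    have e2 : (w.support.map F).sum = (w.support.dropLast.map F).sum + F a := by
      conv_lhs => rw [← List.dropLast_append_getLast hne']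
      rw [w.getLast_support]
      simp only [List.map_append, List.sum_append, List.map_cons, List.map_nil, List.sum_cons, List.sum_nil, add_zero]
    linear_combination e2 - e1
  have hfun : ∀ d : G.Dart, fin2Z (χ d.edge) = g d + F d.fst + F d.snd := by
    intro d
    simp only [hgdef]
    linear_combination -zmod2_add_self (F d.toProd.1) - zmod2_add_self (F d.toProd.2)
  have hT : (w.edges.map (fun e => fin2Z (χ e))).sum = 0 := by
    have hE : w.edges.map (fun e => fin2Z (χ e)) = w.darts.map (fun d => fin2Z (χ d.edge)) := by
      rw [SimpleGraph.Walk.edges, List.map_map]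
      rfl
    rw [hE]
    rw [show (fun d : G.Dart => fin2Z (χ d.edge)) = (fun d => (g d + F d.fst) + F d.snd) from
      funext fun d => by rw [hfun d]]
    rw [list_sum_map_add w.darts (fun d => g d + F d.fst) (fun d => F d.snd),
      list_sum_map_add w.darts g (fun d => F d.fst)]
    rw [hsum_g, hfst, hsnd, hTD]
    rw [zero_add]
    exact zmod2_add_self _
  -- conclude
  have hcast : (((w.edges.filter (fun e => χ e = c)).length : ℕ) : ZMod 2) = 0 := by
    rw [filter_len_cast χ c w.edges, hT]
    rw [SimpleGraph.Walk.length_edges, hw.length_eq, Fintype.card_fin]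
    obtain ⟨m, rfl⟩ := hne
    rw [add_nsmul, zmod2_add_self]
    exact zero_add 0
  obtain ⟨m, hm⟩ := (ZMod.natCast_eq_zero_iff _ 2).mp hcast
  exact ⟨m, by omega⟩
end

section
/- Let n ≥ 4 be an even integer. Then the unique-Ramsey number of Hamilton paths satisfies r_u(n, P_n) ≤ n/2 + 1; that is, there exists an edge-coloring of the complete graph K_n with n/2 + 1 colors under which every Hamilton path of K_n contains some color occurring exactly once. -/
set_option linter.unusedSectionVars false

namespace UniqueRamseyAux

open List

variable {V : Type*} [DecidableEq V]

/-- The list of consecutive pairs of a list, as unordered pairs. -/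
def pairEdges : List V → List (Sym2 V)
  | a :: b :: t => s(a, b) :: pairEdges (b :: t)
  | _ => []

@[simp] lemma pairEdges_nil : pairEdges ([] : List V) = [] := rfl

@[simp] lemma pairEdges_single (a : V) : pairEdges [a] = [] := rfl

@[simp] lemma pairEdges_cons_cons (a b : V) (t : List V) :
    pairEdges (a :: b :: t) = s(a, b) :: pairEdges (b :: t) := rfl

lemma pairEdges_subset_cons (a : V) (t : List V) : pairEdges t ⊆ pairEdges (a :: t) := by
  cases t with
  | nil => simp
  | cons b t' => intro e he; exact List.mem_cons_of_mem _ he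

lemma walk_edges_eq {W : Type*} {G : SimpleGraph W} {u v : W} (w : G.Walk u v) :
    w.edges = pairEdges w.support := by
  induction w with
  | nil => rfl
  | @cons u x v h p ih =>
    rw [SimpleGraph.Walk.edges_cons, SimpleGraph.Walk.support_cons, ih, p.support_eq_cons]
    rfl

lemma pairEdges_length : ∀ (L : List V), L ≠ [] → (pairEdges L).length + 1 = L.length := by
  intro L
  induction L with
  | nil => simp
  | cons a t ih =>
    intro _
    cases t with
    | nil => simp
    | cons b t' =>
      have := ih (by simp)
      simp only [pairEdges_cons_cons, List.length_cons] at *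
      omega

lemma countP_mem_eq_zero (x : V) :
    ∀ (L : List V), x ∉ L → (pairEdges L).countP (fun e => decide (x ∈ e)) = 0 := by
  intro L
  induction L with
  | nil => simp
  | cons a t ih =>
    intro hx
    cases t with
    | nil => simp
    | cons b t' =>
      have hxa : x ≠ a := by intro h; exact hx (h ▸ List.mem_cons_self)
      have hxb : x ∉ b :: t' := fun h => hx (List.mem_cons_of_mem _ h)
      have hxb' : x ≠ b := by intro h; exact hxb (h ▸ List.mem_cons_self)
      have h0 := ih hxb
      simp only [pairEdges_cons_cons, List.countP_cons, h0]
      simp [Sym2.mem_iff, hxa, hxb']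

lemma countP_mem_head_le_one (x : V) (t : List V) (hx : x ∉ t) :
    (pairEdges (x :: t)).countP (fun e => decide (x ∈ e)) ≤ 1 := by
  cases t with
  | nil => simp
  | cons b t' =>
    have h0 := countP_mem_eq_zero x (b :: t') hx
    simp only [pairEdges_cons_cons, List.countP_cons, h0]
    split <;> simp

lemma countP_mem_le_two (x : V) :
    ∀ (L : List V), L.Nodup → (pairEdges L).countP (fun e => decide (x ∈ e)) ≤ 2 := by
  intro L
  induction L with
  | nil => simp
  | cons a t ih =>
    intro hnd
    have hat : a ∉ t := (List.nodup_cons.1 hnd).1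
    have hndt : t.Nodup := (List.nodup_cons.1 hnd).2
    cases t with
    | nil => simp
    | cons b t' =>
      by_cases hxa : x = a
      · subst hxa
        exact (countP_mem_head_le_one x (b :: t') hat).trans (by omega)
      · by_cases hxb : x = b
        · subst hxb
          have hxt' : x ∉ t' := (List.nodup_cons.1 hndt).1
          have h1 := countP_mem_head_le_one x t' hxt'
          simp only [pairEdges_cons_cons, List.countP_cons]
          split <;> omega
        · have h2 := ih hndt
          simp only [pairEdges_cons_cons, List.countP_cons] at h2 ⊢
          have : (decide (x ∈ s(a, b)) : Bool) = false := by
            simp [Sym2.mem_iff, hxa, hxb]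
          rw [this]
          simpa using h2

lemma propagate_head (Z : V → Prop) :
    ∀ (t : List V) (a : V), (∀ x y, Z x → s(x, y) ∈ pairEdges (a :: t) → Z y) →
      Z a → ∀ y ∈ a :: t, Z y := by
  intro t
  induction t with
  | nil =>
    intro a _ hZ y hy
    rw [List.mem_singleton] at hy
    exact hy ▸ hZ
  | cons b t' ih =>
    intro a hstep hZ y hy
    have hZb : Z b := hstep a b hZ (by simp)
    rcases List.mem_cons.1 hy with rfl | hy'
    · exact hZ
    · exact ih b (fun x y hx hmem => hstep x y hx (pairEdges_subset_cons _ _ hmem)) hZb y hy'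

lemma propagate (Z : V → Prop) :
    ∀ (L : List V), (∀ x y, Z x → s(x, y) ∈ pairEdges L → Z y) →
      ∀ x ∈ L, Z x → ∀ y ∈ L, Z y := by
  intro L
  induction L with
  | nil => intro _ x hx; cases hx
  | cons a t ih =>
    intro hstep x hx hZx y hy
    rcases List.mem_cons.1 hx with h | hx'
    · exact propagate_head Z t a hstep (h ▸ hZx) y hy
    · have hstep' : ∀ x y, Z x → s(x, y) ∈ pairEdges t → Z y :=
        fun x y hx hmem => hstep x y hx (pairEdges_subset_cons _ _ hmem)
      have hall : ∀ y ∈ t, Z y := ih hstep' x hx' hZx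
      rcases List.mem_cons.1 hy with hy0 | hy'
      · subst hy0
        cases t with
        | nil => cases hx'
        | cons b t' =>
          have hZb : Z b := hall b (List.mem_cons_self)
          refine hstep b y hZb ?_
          rw [Sym2.eq_swap]
          simp
      · exact hall y hy'

/-- The coloring function on values. -/
def cf (k a b : ℕ) : ℕ := if a < k ∧ k ≤ b then a else if b < k ∧ k ≤ a then b else k

lemma cf_comm (k a b : ℕ) : cf k a b = cf k b a := by
  unfold cf; split_ifs <;> omega

lemma cf_le (k a b : ℕ) : cf k a b ≤ k := by
  unfold cf; split_ifs <;> omega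

lemma cf_eq_left {k a b : ℕ} (h1 : a < k) (h2 : k ≤ b) : cf k a b = a := by
  simp [cf, h1, h2]

lemma cf_center {k a b : ℕ} (h : cf k a b < k) : cf k a b = a ∨ cf k a b = b := by
  unfold cf at h ⊢; split_ifs at h ⊢ <;> omega

lemma cf_both_small {k a b : ℕ} (h1 : a < k) (h2 : b < k) : cf k a b = k := by
  unfold cf; split_ifs <;> omega

/-- The coloring on `Sym2 (Fin n)`, with values in `ℕ`. -/
def chiN (n k : ℕ) : Sym2 (Fin n) → ℕ :=
  Sym2.lift ⟨fun a b => cf k a.val b.val, fun a b => cf_comm k a.val b.val⟩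

@[simp] lemma chiN_mk {n : ℕ} (k : ℕ) (a b : Fin n) : chiN n k s(a, b) = cf k a.val b.val :=
  Sym2.lift_mk _ _ _

lemma chiN_le {n : ℕ} (k : ℕ) (e : Sym2 (Fin n)) : chiN n k e ≤ k := by
  induction e using Sym2.ind with
  | _ a b => simpa using cf_le k a.val b.val

lemma countP_congr' {α : Type*} (p q : α → Bool) :
    ∀ (l : List α), (∀ a ∈ l, p a = q a) → l.countP p = l.countP q := by
  intro l
  induction l with
  | nil => simp
  | cons a t ih =>
    intro h
    simp only [List.countP_cons, h a (List.mem_cons_self),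
      ih (fun a ha => h a (List.mem_cons_of_mem _ ha))]

lemma countP_or_disjoint {α : Type*} (p q : α → Bool) (h : ∀ a, ¬(p a = true ∧ q a = true)) :
    ∀ (l : List α), l.countP (fun a => p a || q a) = l.countP p + l.countP q := by
  intro l
  induction l with
  | nil => simp
  | cons a t ih =>
    have := h a
    simp only [List.countP_cons, ih]
    cases hp : p a <;> cases hq : q a <;> simp_all <;> omega

lemma countP_lt_sum {α : Type*} (f : α → ℕ) (l : List α) :
    ∀ (m : ℕ), l.countP (fun e => decide (f e < m)) =
      ∑ i ∈ Finset.range m, l.countP (fun e => decide (f e = i)) := by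
  intro m
  induction m with
  | zero => simp
  | succ m ih =>
    rw [Finset.sum_range_succ, ← ih]
    rw [← countP_or_disjoint (fun e => decide (f e < m)) (fun e => decide (f e = m))
      (by intro a; simp; omega)]
    apply countP_congr'
    intro a _
    by_cases h1 : f a < m <;> by_cases h2 : f a = m <;> simp [h1, h2] <;> omega

/-- Main combinatorial lemma, in list form. -/
theorem main_list (k n : ℕ) (hk : 1 ≤ k) (hn : n = 2 * k + 2) (L : List (Fin n))
    (hnd : L.Nodup) (hall : ∀ x : Fin n, x ∈ L) :
    ∃ c ≤ k, (pairEdges L).countP (fun e => decide (chiN n k e = c)) = 1 := by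
  set l := pairEdges L with hl
  -- counts of colors
  by_cases hex : ∃ i < k, l.countP (fun e => decide (chiN n k e = i)) = 1
  · obtain ⟨i, hik, hi⟩ := hex
    exact ⟨i, le_of_lt hik, hi⟩
  push_neg at hex
  -- membership of center vertex in edges of its color
  have hmem_of_color : ∀ (i : ℕ) (hik : i < k) (e : Sym2 (Fin n)), chiN n k e = i →
      (⟨i, by omega⟩ : Fin n) ∈ e := by
    intro i hik e
    induction e using Sym2.ind with
    | _ a b =>
      intro he
      rw [chiN_mk] at he
      have := cf_center (k := k) (a := a.val) (b := b.val) (by omega)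
      rw [he] at this
      rw [Sym2.mem_iff]
      rcases this with h | h
      · left; exact Fin.ext (by simpa using h)
      · right; exact Fin.ext (by simpa using h)
  -- each center color appears at most twice
  have hle2 : ∀ i < k, l.countP (fun e => decide (chiN n k e = i)) ≤ 2 := by
    intro i hik
    calc l.countP (fun e => decide (chiN n k e = i))
        ≤ l.countP (fun e => decide ((⟨i, by omega⟩ : Fin n) ∈ e)) := by
          apply List.countP_mono_left
          intro e _ he
          simp only [decide_eq_true_eq] at he ⊢
          exact hmem_of_color i hik e he
      _ ≤ 2 := countP_mem_le_two _ L hnd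
  -- no center color appears zero times
  have hne0 : ∀ i < k, l.countP (fun e => decide (chiN n k e = i)) ≠ 0 := by
    intro i hik h0
    -- the Z-propagation argument
    set Z : Fin n → Prop :=
      fun x => x.val < k ∧ l.countP (fun e => decide (chiN n k e = x.val)) = 0 with hZ
    have hstep : ∀ x y, Z x → s(x, y) ∈ l → Z y := by
      intro x y hZx hmem
      obtain ⟨hxk, hx0⟩ := hZx
      -- y is a center
      have hyk : y.val < k := by
        by_contra hyk
        push_neg at hyk
        have hc : chiN n k s(x, y) = x.val := by
          rw [chiN_mk]; exact cf_eq_left hxk hyk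
        have : 0 < l.countP (fun e => decide (chiN n k e = x.val)) :=
          List.countP_pos_iff.2 ⟨s(x, y), hmem, by simp [hc]⟩
        omega
      -- the edge (x,y) has color k, not y
      have hcxy : chiN n k s(x, y) = k := by
        rw [chiN_mk]; exact cf_both_small hxk hyk
      -- count of color y is at most 1
      have hy1 : l.countP (fun e => decide (chiN n k e = y.val)) ≤ 1 := by
        set l' := l.filter (fun e => decide (y ∈ e)) with hl'
        have hlen : l'.length ≤ 2 := by
          rw [hl', ← List.countP_eq_length_filter]
          exact countP_mem_le_two _ L hnd
        have heq : l.countP (fun e => decide (chiN n k e = y.val)) =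
            l'.countP (fun e => decide (chiN n k e = y.val)) := by
          rw [hl', List.countP_filter]
          apply Nat.le_antisymm
          · apply List.countP_mono_left
            intro e _ he
            simp only [decide_eq_true_eq, Bool.and_eq_true] at he ⊢
            exact ⟨he, hmem_of_color y.val hyk e he⟩
          · apply List.countP_mono_left
            intro e _ he
            simp only [decide_eq_true_eq, Bool.and_eq_true] at he ⊢
            exact he.1
        have hpos : 0 < l'.countP (fun e => decide (¬(chiN n k e = y.val))) := by
          apply List.countP_pos_iff.2
          refine ⟨s(x, y), ?_, ?_⟩
          · rw [hl', List.mem_filter]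
            exact ⟨hmem, by simp [Sym2.mem_iff]⟩
          · simp only [decide_eq_true_eq]
            rw [hcxy]; omega
        have hsplit := List.length_eq_countP_add_countP
          (fun e => decide (chiN n k e = y.val)) (l := l')
        rw [heq]
        have : l'.countP (fun a => decide ¬(decide (chiN n k a = y.val)) = true) =
            l'.countP (fun e => decide (¬(chiN n k e = y.val))) := by
          apply countP_congr'
          intro a _
          simp [decide_eq_decide]
        omega
      have := hex y.val hyk
      exact ⟨hyk, by omega⟩
    -- propagate from the center i to a non-center vertex
    have hZi : Z ⟨i, by omega⟩ := ⟨hik, h0⟩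
    have hall' := propagate Z L hstep ⟨i, by omega⟩ (hall _) hZi
    have hu := hall' ⟨k, by omega⟩ (hall _)
    exact absurd hu.1 (by simp)
  -- hence each center color appears exactly twice
  have heq2 : ∀ i < k, l.countP (fun e => decide (chiN n k e = i)) = 2 := by
    intro i hik
    have h1 := hle2 i hik
    have h2 := hne0 i hik
    have h3 := hex i hik
    omega
  -- total number of edges
  have hLlen : L.length = n := by
    have h1 : L.toFinset = Finset.univ := Finset.eq_univ_iff_forall.2 (by simpa using hall)
    have h2 := List.toFinset_card_of_nodup hnd
    rw [h1] at h2
    simpa using h2.symm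
  have hlen : l.length + 1 = n := by
    rw [hl, pairEdges_length L (by
      intro h
      have := hall ⟨0, by omega⟩
      rw [h] at this
      cases this)]
    exact hLlen
  -- count of cross edges
  have hcross : l.countP (fun e => decide (chiN n k e < k)) = 2 * k := by
    rw [countP_lt_sum]
    rw [Finset.sum_congr rfl (fun i hi => heq2 i (Finset.mem_range.1 hi))]
    simp [Finset.sum_const, Finset.card_range, Nat.mul_comm]
  -- count of color k
  refine ⟨k, le_refl k, ?_⟩
  have hsplit := List.length_eq_countP_add_countP (fun e => decide (chiN n k e < k)) (l := l)
  have hrest : l.countP (fun a => decide ¬(decide (chiN n k a < k)) = true) =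
      l.countP (fun e => decide (chiN n k e = k)) := by
    apply countP_congr'
    intro a _
    have := chiN_le (n := n) k a
    simp [decide_eq_decide]
    omega
  rw [hcross, hrest] at hsplit
  omega

end UniqueRamseyAux

open UniqueRamseyAux

/-- **Proposition.** For even `n ≥ 4`, `r_u(n, P_n) ≤ n/2 + 1`: there is an
edge-coloring of `K_n` with `n/2 + 1` colors under which every Hamilton path
has some color occurring exactly once. -/
theorem unique_ramsey_hamilton_path_upper (n : ℕ) (hn : 4 ≤ n) (hne : Even n) :
    ∃ χ : Sym2 (Fin n) → Fin (n / 2 + 1),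
      ∀ (u v : Fin n) (w : (⊤ : SimpleGraph (Fin n)).Walk u v), w.IsHamiltonian →
        ∃ c, (w.edges.filter (fun e => χ e = c)).length = 1 := by
  obtain ⟨m, hm⟩ := hne
  set k := n / 2 - 1 with hk
  have hm2 : n / 2 = m := by omega
  have hkn : n = 2 * k + 2 := by omega
  have hk1 : 1 ≤ k := by omega
  have hb : ∀ e : Sym2 (Fin n), chiN n k e < n / 2 + 1 := by
    intro e
    have := chiN_le (n := n) k e
    omega
  refine ⟨fun e => ⟨chiN n k e, hb e⟩, ?_⟩
  intro u v w hham
  have hnd : w.support.Nodup := hham.isPath.support_nodup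
  have hall : ∀ x : Fin n, x ∈ w.support := fun x => hham.mem_support x
  obtain ⟨c, hck, hc⟩ := main_list k n hk1 hkn w.support hnd hall
  refine ⟨⟨c, by omega⟩, ?_⟩
  rw [walk_edges_eq w, ← List.countP_eq_length_filter]
  refine Eq.trans (countP_congr' _ (fun e => decide (chiN n k e = c)) _ ?_) hc
  intro e _
  simp [decide_eq_decide, Fin.ext_iff]
end
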